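/- Let M be an irreducible FA-glider of infinite essential length. Then for every i ≥ 0, either M_i = M_{i+1} or the quotient M_i/M_{i+1} is a simple left F_0A-module. -/

import Mathlib

/-- A ℤ-filtration on a ring `A` by additive subgroups (= ℤ-submodules):
an ascending chain with `F n * F m ⊆ F (n+m)` and `1 ∈ F 0`. -/
def IsFiltrationZ {A : Type*} [Ring A] (F : ℤ → Submodule ℤ A) : Prop :=
  Monotone F ∧ (1 : A) ∈ F 0 ∧
    ∀ (n m : ℤ), ∀ x ∈ F n, ∀ y ∈ F m, x * y ∈ F (n + m)

/-- A left `F`-glider ideal inside `A`: a descending chain of additive subgroups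
with `F i * M j ⊆ M (j - i)` for `i ≤ j`. -/
def IsGlider {A : Type*} [Ring A] (F : ℤ → Submodule ℤ A) (M : ℕ → Submodule ℤ A) : Prop :=
  Antitone M ∧
    ∀ (i : ℤ) (j : ℕ), i ≤ (j : ℤ) →
      ∀ a ∈ F i, ∀ m ∈ M j, a * m ∈ M ((j : ℤ) - i).toNat

/-- The body of a glider: `B(M) = ⋂ᵢ Mᵢ`. -/
def gliderBody {A : Type*} [Ring A] (M : ℕ → Submodule ℤ A) : Submodule ℤ A := ⨅ i, M i

/-- Triviality of a subglider `N` of `M`: type T1, T2 or T3. -/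
def IsTrivialSubglider {A : Type*} [Ring A] (M N : ℕ → Submodule ℤ A) : Prop :=
  (∃ n, N n = gliderBody N ∧ M n ≠ gliderBody M) ∨
  (∃ n, N n = ⊥ ∧ M n ≠ ⊥) ∨
  (∃ α : ℕ → ℕ, Monotone α ∧ (∀ n, N n = M (α n)) ∧
      ∀ m n : ℕ, m ≤ n → (α (n - m) : ℤ) ≤ (α n : ℤ) - (m : ℤ))

/-- An irreducible glider: every subglider is trivial. -/
def IsIrreducibleGlider {A : Type*} [Ring A] (F : ℤ → Submodule ℤ A)
    (M : ℕ → Submodule ℤ A) : Prop :=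
  IsGlider F M ∧
    ∀ N : ℕ → Submodule ℤ A, IsGlider F N → (∀ i, N i ≤ M i) → IsTrivialSubglider M N

/-- Let `M` be an irreducible `FA`-glider of infinite essential length. Then for every
`i`, either `M i = M (i+1)` or the quotient `M i / M (i+1)` is a simple left
`F 0`-module (expressed as: there is no strictly intermediate `F 0`-stable subgroup). -/
theorem stmt_12 {A : Type*} [Ring A] (F : ℤ → Submodule ℤ A)
    (hF : IsFiltrationZ F)
    (M : ℕ → Submodule ℤ A)
    (hirr : IsIrreducibleGlider F M)
    (hinf : ∀ d : ℕ, ∃ n : ℕ, d ≤ n ∧ M (n + 1) < M n) :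
    ∀ i : ℕ, M i = M (i + 1) ∨
      (M (i + 1) ≠ M i ∧
        ∀ N : Submodule ℤ A, (∀ b ∈ F 0, ∀ m ∈ N, b * m ∈ N) →
          M (i + 1) ≤ N → N ≤ M i → N = M (i + 1) ∨ N = M i) := by
  intro i
  by_cases hMi : M i = M (i + 1)
  · exact Or.inl hMi
  · refine Or.inr ⟨fun h => hMi h.symm, ?_⟩
    intro N hNstab hle1 hle2
    by_contra hcon
    push_neg at hcon
    obtain ⟨hne1, hne2⟩ := hcon
    have hlt1 : M (i + 1) < N := lt_of_le_of_ne hle1 (Ne.symm hne1)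
    have hlt2 : N < M i := lt_of_le_of_ne hle2 hne2
    obtain ⟨⟨hMmono, hMmul⟩, hsub⟩ := hirr
    obtain ⟨hFmono, hF1, hFmul⟩ := hF
    set G : ℕ → Set A := fun k => {x | ∃ a ∈ F ((i : ℤ) - k), ∃ m ∈ N, x = a * m} with hG
    set S : ℕ → Submodule ℤ A :=
      fun k => Submodule.span ℤ (G k) ⊔ M (i + 1 + k) with hS
    have hSdef : ∀ k, S k = Submodule.span ℤ (G k) ⊔ M (i + 1 + k) := fun k => rfl
    have hGmem : ∀ (k : ℕ) (a : A), a ∈ F ((i : ℤ) - k) → ∀ m ∈ N, a * m ∈ G k := by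
      intro k a ha m hm
      exact ⟨a, ha, m, hm, rfl⟩
    have hGle : ∀ k, Submodule.span ℤ (G k) ≤ M k := by
      intro k
      rw [Submodule.span_le]
      rintro x ⟨a, ha, m, hm, rfl⟩
      have h1 := hMmul ((i : ℤ) - k) i (by omega) a ha m (hle2 hm)
      have he : ((i : ℤ) - ((i : ℤ) - k)).toNat = k := by omega
      rwa [he] at h1
    have hSle : ∀ k, S k ≤ M k := by
      intro k
      rw [hSdef]
      exact sup_le (hGle k) (hMmono (by omega))
    have key : ∀ (i' : ℤ) (j : ℕ), i' ≤ (j : ℤ) → ∀ a ∈ F i',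
        ∀ x ∈ Submodule.span ℤ (G j),
        a * x ∈ Submodule.span ℤ (G ((j : ℤ) - i').toNat) := by
      intro i' j hij a ha x hx
      have hcm : Submodule.span ℤ (G j) ≤
          (Submodule.span ℤ (G ((j : ℤ) - i').toNat)).comap (LinearMap.mulLeft ℤ a) := by
        rw [Submodule.span_le]
        rintro z ⟨b, hb, m, hm, rfl⟩
        refine Set.mem_of_eq_of_mem rfl (Submodule.mem_comap.mpr ?_)
        rw [LinearMap.mulLeft_apply, ← mul_assoc]
        refine Submodule.subset_span (hGmem _ (a * b) ?_ m hm)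
        have h2 := hFmul i' ((i : ℤ) - j) a ha b hb
        exact hFmono (by omega) h2
      exact hcm hx
    have hSglider : IsGlider F S := by
      constructor
      · intro k l hkl
        rw [hSdef, hSdef]
        refine sup_le_sup ?_ (hMmono (by omega))
        rw [Submodule.span_le]
        rintro x ⟨a, ha, m, hm, rfl⟩
        exact Submodule.subset_span (hGmem _ a (hFmono (by omega) ha) m hm)
      · intro i' j hij a ha m hm
        rw [hSdef] at hm
        rw [hSdef]
        obtain ⟨x, hx, y, hy, rfl⟩ := Submodule.mem_sup.mp hm
        rw [mul_add]
        refine Submodule.add_mem _ ?_ ?_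
        · exact Submodule.mem_sup_left (key i' j hij a ha x hx)
        · refine Submodule.mem_sup_right ?_
          have h1 := hMmul i' (i + 1 + j) (by push_cast at hij ⊢; omega) a ha y hy
          have he2 : (((i + 1 + j : ℕ) : ℤ) - i').toNat = i + 1 + ((j : ℤ) - i').toNat := by
            push_cast; omega
          rwa [he2] at h1
    have hNnotM : ∀ j : ℕ, N ≠ M j := by
      intro j hNe
      rcases le_or_gt j i with h | h
      · have h1 : M i ≤ N := by rw [hNe]; exact hMmono h
        exact absurd h1 hlt2.not_ge
      · have h1 : N ≤ M (i + 1) := by rw [hNe]; exact hMmono (by omega)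
        exact absurd h1 hlt1.not_ge
    have hSi : S i = N := by
      rw [hSdef]
      apply le_antisymm
      · refine sup_le ?_ (le_trans (hMmono (by omega)) hle1)
        rw [Submodule.span_le]
        rintro x ⟨a, ha, m, hm, rfl⟩
        have hz : (i : ℤ) - (i : ℕ) = 0 := by omega
        rw [hz] at ha
        exact hNstab a ha m hm
      · intro m hm
        refine Submodule.mem_sup_left (Submodule.subset_span ?_)
        have h1 : (1 : A) * m ∈ G i := by
          refine hGmem i 1 ?_ m hm
          have hz : (i : ℤ) - (i : ℕ) = 0 := by omega
          rw [hz]; exact hF1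
        rwa [one_mul] at h1
    rcases hsub S hSglider hSle with ⟨n, hn, _⟩ | ⟨n, hn, _⟩ | ⟨α, hαmono, hα, _⟩
    · -- T1
      obtain ⟨m, hm1, hm2⟩ := hinf (i + 1 + n)
      have h1 : M m ≤ S n := by
        rw [hSdef]
        exact le_trans (hMmono hm1) le_sup_right
      have h2 : S n ≤ M (m + 1) := by
        rw [hn]
        exact le_trans (iInf_le (fun k => S k) (m + 1)) (hSle (m + 1))
      exact absurd (le_trans h1 h2) hm2.not_ge
    · -- T2
      obtain ⟨m, hm1, hm2⟩ := hinf (i + 1 + n)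
      have h1 : M m ≤ S n := by
        rw [hSdef]
        exact le_trans (hMmono hm1) le_sup_right
      rw [hn] at h1
      exact absurd (lt_of_lt_of_le hm2 h1) not_lt_bot
    · -- T3
      exact hNnotM (α i) (by rw [← hSi]; exact hα i)
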